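/- Let (Ω, μ) be a probability space, A an N×N real symmetric positive-definite matrix with smallest eigenvalue λ_min, largest eigenvalue λ_max, and condition number κ(A) = λ_max/λ_min, F : Ω → R^N Bochner integrable, and α* := ω ↦ A⁻¹F(ω). Let S be a nonempty set of Bochner-integrable functions Ω → R^N and let α̂ ∈ S be a minimizer over S of the loss L(α) = ∫_Ω |Aα(ω) − F(ω)|₂ dμ(ω). Then ‖α* − α̂‖_{L¹(Ω)} ≤ κ(A) · inf_{α ∈ S} ‖α − α*‖_{L¹(Ω)}. -/

import Mathlib

open MeasureTheory Matrix

/-- The Euclidean norm on `ℝ^N`. -/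
noncomputable def euclNorm {N : ℕ} (x : Fin N → ℝ) : ℝ := Real.sqrt (∑ i, x i ^ 2)

lemma euclNorm_eq_norm {N : ℕ} (x : Fin N → ℝ) :
    euclNorm x = ‖(WithLp.equiv 2 (Fin N → ℝ)).symm x‖ := by
  simp [euclNorm, EuclideanSpace.norm_eq, Real.norm_eq_abs, sq_abs]

lemma euclNorm_neg {N : ℕ} (x : Fin N → ℝ) : euclNorm (-x) = euclNorm x := by
  simp [euclNorm]

lemma euclNorm_mono {N : ℕ} (d e : Fin N → ℝ) (h : ∀ i, d i ^ 2 ≤ e i ^ 2) :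
    euclNorm d ≤ euclNorm e :=
  Real.sqrt_le_sqrt (Finset.sum_le_sum fun i _ => h i)

lemma euclNorm_const_mul {N : ℕ} (k : ℝ) (hk : 0 ≤ k) (e : Fin N → ℝ) :
    euclNorm (fun i => k * e i) = k * euclNorm e := by
  simp only [euclNorm, mul_pow, ← Finset.mul_sum]
  rw [Real.sqrt_mul (sq_nonneg k), Real.sqrt_sq hk]

lemma euclNorm_mulVec_bounds {N : ℕ} (A : Matrix (Fin N) (Fin N) ℝ) (hA : A.IsHermitian)
    {a bnd : ℝ} (ha : 0 ≤ a) (hab : a ≤ bnd) (hb : ∀ i, a ≤ hA.eigenvalues i ∧ hA.eigenvalues i ≤ bnd)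
    (x : Fin N → ℝ) :
    a * euclNorm x ≤ euclNorm (A.mulVec x) ∧ euclNorm (A.mulVec x) ≤ bnd * euclNorm x := by
  classical
  set b := hA.eigenvectorBasis with hbdef
  set y : EuclideanSpace ℝ (Fin N) := (WithLp.equiv 2 (Fin N → ℝ)).symm x with hydef
  set c : Fin N → ℝ := fun i => b.repr y i with hcdef
  have hrep : ∀ (d : Fin N → ℝ) (j : Fin N),
      b.repr (∑ i, d i • b i) j = d j := by
    intro d j
    rw [OrthonormalBasis.repr_apply_apply]
    exact b.orthonormal.inner_right_fintype d j
  have hnorm : ∀ d : Fin N → ℝ, ‖(∑ i, d i • b i : EuclideanSpace ℝ (Fin N))‖ = euclNorm d := by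
    intro d
    rw [← b.repr.norm_map (∑ i, d i • b i), EuclideanSpace.norm_eq]
    simp only [euclNorm]
    congr 1
    refine Finset.sum_congr rfl fun j _ => ?_
    rw [show (b.repr (∑ i, d i • b i)) j = d j from hrep d j]
    simp [Real.norm_eq_abs, sq_abs]
  have hy : y = ∑ i, c i • b i := (b.sum_repr y).symm
  have hx_norm : euclNorm x = euclNorm c := by
    rw [euclNorm_eq_norm, ← hydef, hy, hnorm]
  have hT : (WithLp.equiv 2 (Fin N → ℝ)).symm (A.mulVec x)
      = ∑ i, (hA.eigenvalues i * c i) • b i := by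
    rw [show (WithLp.equiv 2 (Fin N → ℝ)).symm (A.mulVec x) = Matrix.toEuclideanLin A y from rfl, hy, map_sum]
    refine Finset.sum_congr rfl fun i _ => ?_
    rw [_root_.map_smul]
    have h1 : Matrix.toEuclideanLin A (b i) = hA.eigenvalues i • (b i) := by
      apply (WithLp.equiv 2 (Fin N → ℝ)).injective
      have := hA.mulVec_eigenvectorBasis i
      simpa [Matrix.toEuclideanLin_apply] using this
    rw [h1, smul_smul, mul_comm]
  have hAx_norm : euclNorm (A.mulVec x) = euclNorm (fun i => hA.eigenvalues i * c i) := by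
    rw [euclNorm_eq_norm, hT, hnorm]
  constructor
  · rw [hx_norm, hAx_norm, ← euclNorm_const_mul a ha c]
    refine euclNorm_mono _ _ fun i => ?_
    rw [mul_pow, mul_pow]
    exact mul_le_mul_of_nonneg_right
      (pow_le_pow_left₀ ha (hb i).1 2) (sq_nonneg _)
  · have hbnd : 0 ≤ bnd := le_trans ha hab
    rw [hx_norm, hAx_norm, ← euclNorm_const_mul bnd hbnd c]
    refine euclNorm_mono _ _ fun i => ?_
    rw [mul_pow, mul_pow]
    refine mul_le_mul_of_nonneg_right ?_ (sq_nonneg _)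
    exact pow_le_pow_left₀ (le_trans ha (hb i).1) (hb i).2 2

lemma integrable_euclNorm_comp {Ω : Type*} [MeasurableSpace Ω] {μ : Measure Ω} {N : ℕ}
    {g : Ω → Fin N → ℝ} (hg : Integrable g μ) :
    Integrable (fun ω => euclNorm (g ω)) μ := by
  have h1 : Integrable (fun ω => (PiLp.continuousLinearEquiv 2 ℝ (fun _ : Fin N => ℝ)).symm
      (g ω)) μ :=
    ((PiLp.continuousLinearEquiv 2 ℝ (fun _ : Fin N => ℝ)).symm :
      (Fin N → ℝ) →L[ℝ] EuclideanSpace ℝ (Fin N)).integrable_comp hg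
  have := h1.norm
  refine this.congr (Filter.Eventually.of_forall fun ω => ?_)
  show ‖(PiLp.continuousLinearEquiv 2 ℝ fun _ => ℝ).symm (g ω)‖ = euclNorm (g ω)
  rw [euclNorm_eq_norm]
  rfl

lemma integrable_mulVec_comp {Ω : Type*} [MeasurableSpace Ω] {μ : Measure Ω} {N : ℕ}
    (B : Matrix (Fin N) (Fin N) ℝ) {g : Ω → Fin N → ℝ} (hg : Integrable g μ) :
    Integrable (fun ω => B.mulVec (g ω)) μ :=
  (LinearMap.toContinuousLinearMap (Matrix.mulVecLin B)).integrable_comp hg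

/-- Cea-type approximation-error lemma for the symmetric positive-definite case: if `A` is an
`N×N` real symmetric positive-definite matrix with smallest and largest eigenvalues `lmin` and
`lmax`, `F : Ω → ℝ^N` is Bochner integrable over the probability space `(Ω, μ)`,
`α* = A⁻¹ F`, `S` is a nonempty set of integrable functions and `α̂ ∈ S` minimizes
`L(α) = ∫ |Aα(ω) − F(ω)|₂ dμ` over `S`, then
`‖α* − α̂‖_{L¹(Ω)} ≤ κ(A) inf_{α ∈ S} ‖α − α*‖_{L¹(Ω)}` with `κ(A) = lmax / lmin`. -/
theorem stmt9 {Ω : Type*} [MeasurableSpace Ω] (μ : Measure Ω) [IsProbabilityMeasure μ]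
    {N : ℕ} (A : Matrix (Fin N) (Fin N) ℝ) (hA : A.IsHermitian) (hApd : A.PosDef)
    (lmin lmax : ℝ)
    (hmin : IsLeast (Set.range hA.eigenvalues) lmin)
    (hmax : IsGreatest (Set.range hA.eigenvalues) lmax)
    (F : Ω → Fin N → ℝ) (hF : Integrable F μ)
    (αstar : Ω → Fin N → ℝ) (hαstar : αstar = fun ω => A⁻¹.mulVec (F ω))
    (S : Set (Ω → Fin N → ℝ)) (hSne : S.Nonempty) (hSint : ∀ α ∈ S, Integrable α μ)
    (αhat : Ω → Fin N → ℝ) (hαhatmem : αhat ∈ S)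
    (hαhatmin : ∀ α ∈ S, (∫ ω, euclNorm (A.mulVec (αhat ω) - F ω) ∂μ)
        ≤ ∫ ω, euclNorm (A.mulVec (α ω) - F ω) ∂μ) :
    (∫ ω, euclNorm (αstar ω - αhat ω) ∂μ)
      ≤ (lmax / lmin) * ⨅ α : S, ∫ ω, euclNorm ((α : Ω → Fin N → ℝ) ω - αstar ω) ∂μ := by
  classical
  -- basic eigenvalue facts
  obtain ⟨i₀, hi₀⟩ := hmin.1
  have hlmin_pos : 0 < lmin := hi₀ ▸ hApd.eigenvalues_pos i₀
  have hlab : lmin ≤ lmax := hmax.2 hmin.1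
  have hlmax_pos : 0 < lmax := lt_of_lt_of_le hlmin_pos hlab
  have hb : ∀ i, lmin ≤ hA.eigenvalues i ∧ hA.eigenvalues i ≤ lmax :=
    fun i => ⟨hmin.2 ⟨i, rfl⟩, hmax.2 ⟨i, rfl⟩⟩
  have hbounds := euclNorm_mulVec_bounds A hA hlmin_pos.le hlab hb
  -- A αstar = F
  have hAinv : A * A⁻¹ = 1 := Matrix.mul_nonsing_inv A (isUnit_iff_ne_zero.mpr hApd.det_pos.ne')
  have hAαstar : ∀ ω, A.mulVec (αstar ω) = F ω := by
    intro ω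
    rw [hαstar]
    simp only
    rw [Matrix.mulVec_mulVec, hAinv, Matrix.one_mulVec]
  -- integrability facts
  have hαstar_int : Integrable αstar μ := by
    rw [hαstar]
    exact integrable_mulVec_comp A⁻¹ hF
  have hαhat_int : Integrable αhat μ := hSint αhat hαhatmem
  -- key inequality for each α ∈ S
  have key : ∀ α ∈ S, (∫ ω, euclNorm (αstar ω - αhat ω) ∂μ)
      ≤ (lmax / lmin) * ∫ ω, euclNorm (α ω - αstar ω) ∂μ := by
    intro α hα
    have hα_int := hSint α hα
    have h1 : lmin * ∫ ω, euclNorm (αstar ω - αhat ω) ∂μ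
        ≤ ∫ ω, euclNorm (A.mulVec (αhat ω) - F ω) ∂μ := by
      rw [← integral_const_mul]
      refine integral_mono ((integrable_euclNorm_comp (hαstar_int.sub hαhat_int)).const_mul _)
        (integrable_euclNorm_comp ((integrable_mulVec_comp A hαhat_int).sub hF)) fun ω => ?_
      have := (hbounds (αstar ω - αhat ω)).1
      have heq : A.mulVec (αstar ω - αhat ω) = -(A.mulVec (αhat ω) - F ω) := by
        rw [Matrix.mulVec_sub, hAαstar]
        abel
      rwa [heq, euclNorm_neg] at this
    have h2 : (∫ ω, euclNorm (A.mulVec (α ω) - F ω) ∂μ)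
        ≤ lmax * ∫ ω, euclNorm (α ω - αstar ω) ∂μ := by
      rw [← integral_const_mul]
      refine integral_mono (integrable_euclNorm_comp ((integrable_mulVec_comp A hα_int).sub hF))
        ((integrable_euclNorm_comp (hα_int.sub hαstar_int)).const_mul _) fun ω => ?_
      have := (hbounds (α ω - αstar ω)).2
      have heq : A.mulVec (α ω - αstar ω) = A.mulVec (α ω) - F ω := by
        rw [Matrix.mulVec_sub, hAαstar]
      rwa [heq] at this
    have h3 := hαhatmin α hα
    have h4 : lmin * ∫ ω, euclNorm (αstar ω - αhat ω) ∂μ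
        ≤ lmax * ∫ ω, euclNorm (α ω - αstar ω) ∂μ := le_trans h1 (le_trans h3 h2)
    rw [div_mul_eq_mul_div, le_div_iff₀ hlmin_pos, mul_comm _ lmin]
    linarith
  -- pass to the infimum
  have : Nonempty ↥S := hSne.to_subtype
  have hκpos : 0 < lmax / lmin := div_pos hlmax_pos hlmin_pos
  rw [← div_le_iff₀' hκpos]
  exact le_ciInf fun α => (div_le_iff₀' hκpos).mpr (key α α.2)
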